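/- Let (q,n) be a Dickson pair with q = p^l and n > 2, and consider the Dickson nearfield setup. Suppose 1 ≤ s, t ≤ n with s ≠ t, that α, β ∈ g^{[s]_q}H, and that α+β ∈ g^{[t]_q}H. Then D(α,β) = {λ ∈ F : λ^{q^d} = λ} where d = gcd(t+n−s, n); in particular |D(α,β)| = q^d = p^{l·d}. -/

import Mathlib

/-- `(q, n)` is a Dickson pair: `q` is a prime power, every prime divisor of `n`
divides `q - 1`, and if `q ≡ 3 (mod 4)` then `4` does not divide `n`. -/
def IsDicksonPair (q n : ℕ) : Prop :=
  0 < q ∧ 0 < n ∧ (∃ p l : ℕ, Nat.Prime p ∧ 0 < l ∧ q = p ^ l) ∧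
    (∀ p : ℕ, Nat.Prime p → p ∣ n → p ∣ q - 1) ∧ (q % 4 = 3 → ¬ 4 ∣ n)

/-- `[k]_q = 1 + q + q^2 + ⋯ + q^(k-1)`. -/
def dq (q k : ℕ) : ℕ := ∑ i ∈ Finset.range k, q ^ i

/-- `x` lies in the coset `g^([k]_q) • H` where `H = ⟨g^n⟩`. -/
def inCoset {F : Type*} [Field F] (g : F) (q n k : ℕ) (x : F) : Prop :=
  ∃ j : ℕ, x = g ^ dq q k * (g ^ n) ^ j

section Aux

open Polynomial

private lemma nat_bezout' (m n : ℕ) (hm : 0 < m) (hn : 0 < n) :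
    ∃ u v : ℕ, u * m = Nat.gcd m n + v * n := by
  have h := Nat.gcd_eq_gcd_ab m n
  set A := Nat.gcdA m n with hA
  set B := Nat.gcdB m n with hB
  set c : ℤ := |A| + |B| with hc
  have hc0 : 0 ≤ c := by positivity
  have hmz : (1:ℤ) ≤ (m:ℤ) := by exact_mod_cast hm
  have hnz : (1:ℤ) ≤ (n:ℤ) := by exact_mod_cast hn
  have h1 : 0 ≤ A + c * n := by
    have h3 : c ≤ c * n := le_mul_of_one_le_right hc0 hnz
    have h4 := neg_abs_le A
    nlinarith [abs_nonneg B]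
  have h2 : 0 ≤ c * m - B := by
    have h3 : c ≤ c * m := le_mul_of_one_le_right hc0 hmz
    have h4 := le_abs_self B
    nlinarith [abs_nonneg A]
  refine ⟨(A + c * n).toNat, (c * m - B).toNat, ?_⟩
  have e1 : ((A + c*n).toNat : ℤ) = A + c*n := Int.toNat_of_nonneg h1
  have e2 : ((c*m - B).toNat : ℤ) = c*m - B := Int.toNat_of_nonneg h2
  have : ((A + c*n).toNat : ℤ) * m = (Nat.gcd m n : ℤ) + ((c*m - B).toNat : ℤ) * n := by
    rw [e1, e2]; linear_combination -h
  exact_mod_cast this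

private lemma fix_mul' {F : Type*} [Monoid F] {x : F} {Q a : ℕ} (h : x ^ Q ^ a = x) :
    ∀ k, x ^ Q ^ (a * k) = x
  | 0 => by simp
  | k + 1 => by
    rw [Nat.mul_succ, pow_add, pow_mul, fix_mul' h k, h]

private lemma fix_gcd' {F : Type*} [Monoid F] {x : F} {Q m n : ℕ} (hm : 0 < m) (hn : 0 < n)
    (h1 : x ^ Q ^ m = x) (h2 : x ^ Q ^ n = x) : x ^ Q ^ Nat.gcd m n = x := by
  obtain ⟨u, v, huv⟩ := nat_bezout' m n hm hn
  have e1 : x ^ Q ^ (m * u) = x := fix_mul' h1 u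
  have e2 : x ^ Q ^ (n * v) = x := fix_mul' h2 v
  calc x ^ Q ^ Nat.gcd m n = (x ^ Q ^ (n * v)) ^ Q ^ Nat.gcd m n := by rw [e2]
    _ = x ^ (Q ^ (n * v) * Q ^ Nat.gcd m n) := (pow_mul x _ _).symm
    _ = x ^ Q ^ (n * v + Nat.gcd m n) := by rw [pow_add]
    _ = x ^ Q ^ (m * u) := by
          rw [Nat.mul_comm m u, huv, Nat.mul_comm n v, Nat.add_comm]
    _ = x := e1

private lemma card_fixed_set' {F : Type*} [Field F] [Fintype F] (p q n d : ℕ) [CharP F p]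
    (hq2 : 2 ≤ q) (hpq : p ∣ q) (hd1 : 0 < d) (hn0 : 0 < n) (hdn : d ∣ n)
    (hcard : Fintype.card F = q ^ n) :
    {lam : F | lam ^ q ^ d = lam}.ncard = q ^ d := by
  classical
  have h1Qd : 1 < q ^ d := Nat.one_lt_pow hd1.ne' hq2
  have h1Qn : 1 < q ^ n := Nat.one_lt_pow hn0.ne' hq2
  have hdvdnat : q ^ d - 1 ∣ q ^ n - 1 := by
    obtain ⟨k, hk⟩ := hdn
    have h := Nat.sub_dvd_pow_sub_pow (q ^ d) 1 k
    rw [one_pow, ← pow_mul, ← hk] at h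
    exact h
  have hpolydvd : (X ^ q ^ d - X : F[X]) ∣ X ^ q ^ n - X := by
    have e : ∀ a : ℕ, 1 ≤ a → (X ^ a - X : F[X]) = X * (X ^ (a - 1) - 1) := by
      intro a ha
      rw [mul_sub, mul_one, ← pow_succ', Nat.sub_add_cancel ha]
    rw [e _ h1Qd.le, e _ h1Qn.le]
    refine mul_dvd_mul_left X ?_
    obtain ⟨k, hk⟩ := hdvdnat
    rw [hk, pow_mul]
    simpa using sub_dvd_pow_sub_pow ((X : F[X]) ^ (q ^ d - 1)) 1 k
  have hbigne : (X ^ q ^ n - X : F[X]) ≠ 0 :=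
    FiniteField.X_pow_card_sub_X_ne_zero F h1Qn
  have hbigsplits : Splits (X ^ q ^ n - X : F[X]) := by
    rw [splits_iff_card_roots, ← hcard, FiniteField.roots_X_pow_card_sub_X,
      FiniteField.X_pow_card_sub_X_natDegree_eq F Fintype.one_lt_card]
    simp
  have hsep_big : Separable (X ^ q ^ n - X : F[X]) :=
    galois_poly_separable p (q ^ n) (dvd_pow hpq hn0.ne')
  have hfsep : Separable (X ^ q ^ d - X : F[X]) := hsep_big.of_dvd hpolydvd
  have hfne : (X ^ q ^ d - X : F[X]) ≠ 0 := FiniteField.X_pow_card_sub_X_ne_zero F h1Qd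
  have hfsplits := hbigsplits.of_dvd hbigne hpolydvd
  have hcardroots : Multiset.card (X ^ q ^ d - X : F[X]).roots = q ^ d := by
    rw [splits_iff_card_roots.mp hfsplits, FiniteField.X_pow_card_sub_X_natDegree_eq F h1Qd]
  have hsetf : {lam : F | lam ^ q ^ d = lam} = ↑(X ^ q ^ d - X : F[X]).roots.toFinset := by
    ext x
    simp [Multiset.mem_toFinset, mem_roots hfne, IsRoot.def, sub_eq_zero]
  rw [hsetf, Set.ncard_coe_finset, Multiset.toFinset_card_of_nodup (nodup_roots hfsep),
    hcardroots]

end Aux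

/-- Dickson nearfield setup with `n > 2`: if `α, β ∈ g^([s]_q) H` and
`α + β ∈ g^([t]_q) H` with `s ≠ t`, then `D(α,β) = {λ : λ^(q^d) = λ}` where
`d = gcd(t + n - s, n)`; in particular `|D(α,β)| = q^d = p^(l·d)`. -/
theorem distributiveSet_eq_of_two_in_same_coset {F : Type*} [Field F] [Fintype F]
    (q n p l : ℕ) (hp : Nat.Prime p) (hl : 0 < l) (hq : q = p ^ l)
    (hqn : IsDicksonPair q n) (hn : 2 < n)
    (hcard : Fintype.card F = q ^ n)
    (g : F) (hg : ∀ x : F, x ≠ 0 → ∃ j : ℕ, x = g ^ j)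
    (circ : F → F → F)
    (hcirc0 : ∀ lam : F, circ 0 lam = 0)
    (hcirc : ∀ k : ℕ, 1 ≤ k → k ≤ n → ∀ x : F, inCoset g q n k x →
      ∀ lam : F, circ x lam = x * lam ^ q ^ k)
    (α β : F) (s t : ℕ) (hs1 : 1 ≤ s) (hsn : s ≤ n) (ht1 : 1 ≤ t) (htn : t ≤ n)
    (hst : s ≠ t)
    (hcα : inCoset g q n s α) (hcβ : inCoset g q n s β)
    (hcαβ : inCoset g q n t (α + β)) :
    {lam : F | circ (α + β) lam = circ α lam + circ β lam} =
      {lam : F | lam ^ q ^ Nat.gcd (t + n - s) n = lam} ∧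
    {lam : F | circ (α + β) lam = circ α lam + circ β lam}.ncard =
      q ^ Nat.gcd (t + n - s) n ∧
    q ^ Nat.gcd (t + n - s) n = p ^ (l * Nat.gcd (t + n - s) n) := by
  classical
  have hq2 : 2 ≤ q := by
    rw [hq]
    calc 2 ≤ p := hp.two_le
      _ = p ^ 1 := (pow_one p).symm
      _ ≤ p ^ l := Nat.pow_le_pow_right hp.pos hl
  have hn0 : 0 < n := by omega
  set m := t + n - s with hm
  have hm1 : 0 < m := by omega
  set d := Nat.gcd m n with hd
  have hd1 : 0 < d := Nat.gcd_pos_of_pos_left n hm1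
  have hdn : d ∣ n := Nat.gcd_dvd_right m n
  -- characteristic
  haveI hcharF : CharP F p := by
    have hc := FiniteField.cast_card_eq_zero F
    rw [hcard, hq, ← pow_mul] at hc
    push_cast at hc
    have hln : l * n ≠ 0 := by positivity
    have hp0 : ((p : ℕ) : F) = 0 := pow_eq_zero_iff hln |>.mp hc
    have hr : ringChar F ∣ p := ringChar.dvd hp0
    haveI : CharP F (ringChar F) := ringChar.charP F
    have hrp : (ringChar F).Prime := CharP.char_is_prime F (ringChar F)
    have heq : ringChar F = p := (Nat.prime_dvd_prime_iff_eq hrp hp).mp hr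
    rw [← heq]; exact ringChar.charP F
  -- g ≠ 0
  have hg0 : g ≠ 0 := by
    intro h0
    have hcard3 : 2 < Fintype.card F := by
      rw [hcard]
      calc 2 < 2 ^ 3 := by norm_num
        _ ≤ 2 ^ n := Nat.pow_le_pow_right (by norm_num) hn
        _ ≤ q ^ n := Nat.pow_le_pow_left hq2 n
    have hsub : (Finset.univ : Finset F) ⊆ {0, 1} := by
      intro x _
      rcases eq_or_ne x 0 with hx | hx
      · simp [hx]
      · obtain ⟨j, hj⟩ := hg x hx
        rcases Nat.eq_zero_or_pos j with hj0 | hj0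
        · simp [hj, hj0]
        · exact absurd (by rw [hj, h0, zero_pow hj0.ne']) hx
    have hle := Finset.card_le_card hsub
    rw [Finset.card_univ] at hle
    have : ({0, 1} : Finset F).card ≤ 2 := Finset.card_insert_le 0 {1} |>.trans (by simp)
    omega
  -- α + β ≠ 0
  have hαβ : α + β ≠ 0 := by
    obtain ⟨j, hj⟩ := hcαβ
    rw [hj]
    exact mul_ne_zero (pow_ne_zero _ hg0) (pow_ne_zero _ (pow_ne_zero _ hg0))
  -- every element is fixed by q^n-power
  have hpc : ∀ x : F, x ^ q ^ n = x := fun x => by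
    rw [← hcard]; exact FiniteField.pow_card x
  -- set equality
  have hsetEq : {lam : F | circ (α + β) lam = circ α lam + circ β lam} =
      {lam : F | lam ^ q ^ d = lam} := by
    ext x
    simp only [Set.mem_setOf_eq]
    rw [hcirc t ht1 htn _ hcαβ, hcirc s hs1 hsn α hcα, hcirc s hs1 hsn β hcβ, ← add_mul]
    constructor
    · intro h
      have h2 : x ^ q ^ t = x ^ q ^ s := mul_left_cancel₀ hαβ h
      have hxm : x ^ q ^ m = x := by
        have e : x ^ q ^ (t + (n - s)) = x := by
          rw [pow_add, pow_mul, h2, ← pow_mul, ← pow_add,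
            show s + (n - s) = n by omega, hpc]
        rwa [show t + (n - s) = m by omega] at e
      exact fix_gcd' hm1 hn0 hxm (hpc x)
    · intro h
      have hxm : x ^ q ^ m = x := by
        have e := fix_mul' h (m / d)
        rwa [Nat.mul_div_cancel' (Nat.gcd_dvd_left m n)] at e
      have h2 : x ^ q ^ t = x ^ q ^ s := by
        have e1 : x ^ q ^ (m + s) = x ^ q ^ s := by rw [pow_add, pow_mul, hxm]
        have e3 : x ^ q ^ (n + t) = x ^ q ^ t := by rw [pow_add, pow_mul, hpc]
        calc x ^ q ^ t = x ^ q ^ (n + t) := e3.symm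
          _ = x ^ q ^ (m + s) := by rw [show m + s = n + t by omega]
          _ = x ^ q ^ s := e1
      rw [h2]
  refine ⟨hsetEq, ?_, by rw [hq, ← pow_mul]⟩
  rw [hsetEq]
  exact card_fixed_set' p q n d hq2 (by rw [hq]; exact dvd_pow_self p hl.ne') hd1 hn0 hdn hcard
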